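/- Let 1 < q < n be coprime, n/q = [α_1,…,α_N] with i-series i_0=n, i_1=q, i_{t+1}=α_t i_t − i_{t−1}, dual expansion n/(n−q) = [a_2,…,a_{e−1}], and r-series r_2 = a_2(n−q) − q, r_3 = r_2 − (n−q), r_4 = (a_3+1)r_3 − r_2, r_j = a_{j−1}r_{j−1} − r_{j−2} for 5 ≤ j ≤ e. Set l_N = 2 + Σ_{p=1}^N (α_p−2) and define the b-series by: b_0 = 1, b_{l_N − 1} = N, and for 1 ≤ t ≤ l_N − 2, b_t is the smallest integer 1 ≤ b_t ≤ N with t ≤ Σ_{p=1}^{b_t}(α_p − 2). Then r_{t+1} = r_{t+2} + i_{b_t} for all 2 ≤ t ≤ e−2. In particular r_{t+1} > r_{t+2} for all 2 ≤ t ≤ e−2. -/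

import Mathlib

/-- The Jung–Hirzebruch negative continued fraction. -/
def ncf : List ℤ → ℚ
  | [] => 0
  | a :: l => (a : ℚ) - (ncf l)⁻¹

lemma ncf_gt_one : ∀ l : List ℤ, (∀ x ∈ l, (2:ℤ) ≤ x) → l ≠ [] → (1:ℚ) < ncf l := by
  intro l
  induction l with
  | nil => intro _ h; simp at h
  | cons a t ih =>
    intro h _
    have ha : (2:ℤ) ≤ a := h a List.mem_cons_self
    have ha' : (2:ℚ) ≤ (a:ℚ) := by exact_mod_cast ha
    match t with
    | [] =>
      show (1:ℚ) < a - (ncf [])⁻¹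
      show (1:ℚ) < a - (0:ℚ)⁻¹
      simp; linarith
    | x :: s =>
      have h1 : (1:ℚ) < ncf (x :: s) := ih (fun y hy => h y (List.mem_cons_of_mem a hy)) (by simp)
      have h2 : (0:ℚ) < (ncf (x::s))⁻¹ := inv_pos.2 (lt_trans one_pos h1)
      have h3 : (ncf (x::s))⁻¹ < 1 := by
        rw [inv_eq_one_div]
        exact (div_lt_one (by linarith)).mpr h1
      show (1:ℚ) < a - (ncf (x::s))⁻¹
      linarith

lemma ncf_inv_mem (s : List ℤ) (hs : ∀ x ∈ s, (2:ℤ) ≤ x) :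
    0 ≤ (ncf s)⁻¹ ∧ (ncf s)⁻¹ < 1 := by
  match s with
  | [] => show (0:ℚ) ≤ (0:ℚ)⁻¹ ∧ (0:ℚ)⁻¹ < (1:ℚ); norm_num
  | x :: t =>
    have h1 : (1:ℚ) < ncf (x :: t) := ncf_gt_one _ hs (by simp)
    have h2 : (0:ℚ) < (ncf (x::t))⁻¹ := inv_pos.2 (lt_trans one_pos h1)
    refine ⟨le_of_lt h2, ?_⟩
    rw [inv_eq_one_div]
    exact (div_lt_one (by linarith)).mpr h1

lemma ncf_inj : ∀ (L1 : List ℤ) (L2 : List ℤ), (∀ x ∈ L1, (2:ℤ) ≤ x) → (∀ x ∈ L2, (2:ℤ) ≤ x) →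
    ncf L1 = ncf L2 → L1 = L2 := by
  intro L1
  induction L1 with
  | nil =>
    intro L2 _ h2 he
    match L2 with
    | [] => rfl
    | y :: u =>
      exfalso
      have := ncf_gt_one (y :: u) h2 (by simp)
      rw [← he] at this
      show False
      have : (1:ℚ) < 0 := this
      norm_num at this
  | cons x t ih =>
    intro L2 h1 h2 he
    match L2 with
    | [] =>
      exfalso
      have := ncf_gt_one (x :: t) h1 (by simp)
      rw [he] at this
      have : (1:ℚ) < 0 := this
      norm_num at this
    | y :: u =>
      have he' : (x:ℚ) - (ncf t)⁻¹ = (y:ℚ) - (ncf u)⁻¹ := he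
      obtain ⟨p1, p2⟩ := ncf_inv_mem t (fun z hz => h1 z (List.mem_cons_of_mem x hz))
      obtain ⟨q1, q2⟩ := ncf_inv_mem u (fun z hz => h2 z (List.mem_cons_of_mem y hz))
      have hxy : x = y := by
        have hlt1 : ((x - y : ℤ) : ℚ) < 1 := by push_cast; linarith
        have hlt2 : (-1 : ℚ) < ((x - y : ℤ) : ℚ) := by push_cast; linarith
        have l1 : (x - y : ℤ) < 1 := by exact_mod_cast hlt1
        have l2 : (-1 : ℤ) < x - y := by exact_mod_cast hlt2
        omega
      subst hxy
      have hinv : (ncf t)⁻¹ = (ncf u)⁻¹ := by linarith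
      have hncf : ncf t = ncf u := inv_injective hinv
      have := ih u (fun z hz => h1 z (List.mem_cons_of_mem x hz))
        (fun z hz => h2 z (List.mem_cons_of_mem x hz)) hncf
      rw [this]

lemma ncf_of_seq : ∀ (M : ℕ) (u A : ℕ → ℤ),
    (∀ j, j < M → u (j+2) = A j * u (j+1) - u j) →
    (∀ j, 1 ≤ j → j ≤ M → 0 < u j) → u M = 1 → u (M+1) = 0 →
    ncf (List.ofFn fun j : Fin M => A j) = (u 0 : ℚ) / (u 1 : ℚ) := by
  intro M
  induction M with
  | zero =>
    intro u A _ _ hM hM1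
    simp only [List.ofFn_zero]
    show (0:ℚ) = (u 0 : ℚ) / (u 1 : ℚ)
    rw [hM1]
    simp
  | succ M ihM =>
    intro u A hrec hpos hM hM1
    have h1pos : 0 < u 1 := hpos 1 le_rfl (by omega)
    have h1ne : ((u 1 : ℚ)) ≠ 0 := by exact_mod_cast h1pos.ne'
    have hu2 : u 2 = A 0 * u 1 - u 0 := hrec 0 (by omega)
    have hofn : (List.ofFn fun j : Fin (M+1) => A j) = A 0 :: List.ofFn fun j : Fin M => A (j+1) := by
      rw [List.ofFn_succ]
      rfl
    have htail : ncf (List.ofFn fun j : Fin M => A (j+1)) = (u 1 : ℚ) / (u 2 : ℚ) := by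
      apply ihM (fun j => u (j+1)) (fun j => A (j+1))
      · intro j hj; exact hrec (j+1) (by omega)
      · intro j hj1 hj2; exact hpos (j+1) (by omega) (by omega)
      · exact hM
      · exact hM1
    rw [hofn]
    show (A 0 : ℚ) - (ncf (List.ofFn fun j : Fin M => A (j+1)))⁻¹ = (u 0 : ℚ) / (u 1 : ℚ)
    rw [htail]
    have hc : (u 2 : ℚ) = (A 0 : ℚ) * (u 1 : ℚ) - (u 0 : ℚ) := by exact_mod_cast hu2
    rw [inv_div, eq_div_iff h1ne, sub_mul, div_mul_cancel₀ _ h1ne]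
    linear_combination -hc



lemma seq_of_ncf : ∀ (M : ℕ) (u A : ℕ → ℤ), 1 ≤ M → (∀ j, j < M → 2 ≤ A j) →
    (∀ j, j < M → u (j+2) = A j * u (j+1) - u j) → 0 < u 1 → IsCoprime (u 0) (u 1) →
    (u 0 : ℚ) / (u 1 : ℚ) = ncf (List.ofFn fun j : Fin M => A j) →
    (∀ j, j ≤ M → 0 < u j) ∧ (∀ j, j < M → u (j+1) < u j) ∧ u M = 1 ∧ u (M+1) = 0 := by
  intro M
  induction M with
  | zero => intro u A h; omega
  | succ M ihM =>
    intro u A _ hA hrec h1pos hcop hv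
    have h1ne : ((u 1 : ℚ)) ≠ 0 := by exact_mod_cast h1pos.ne'
    have hu2 : u 2 = A 0 * u 1 - u 0 := hrec 0 (by omega)
    have hA0 : 2 ≤ A 0 := hA 0 (by omega)
    have hofn : (List.ofFn fun j : Fin (M+1) => A j) = A 0 :: List.ofFn fun j : Fin M => A (j+1) := by
      rw [List.ofFn_succ]; rfl
    rcases Nat.eq_zero_or_pos M with hM0 | hM1
    · -- base case M+1 = 1
      subst hM0
      have : (u 0 : ℚ) / (u 1 : ℚ) = (A 0 : ℚ) := by
        rw [hv, hofn]
        simp [ncf]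
      have hu0 : u 0 = A 0 * u 1 := by
        have := (div_eq_iff h1ne).mp this
        exact_mod_cast this
      have hu20 : u 2 = 0 := by rw [hu2, hu0]; ring
      have hunit : IsUnit (u 1) := by
        apply hcop.isUnit_of_dvd' ⟨A 0, by linarith [hu0]⟩ dvd_rfl
      have h11 : u 1 = 1 := by
        rcases Int.isUnit_iff.mp hunit with h | h
        · exact h
        · omega
      refine ⟨?_, ?_, h11, hu20⟩
      · intro j hj; interval_cases j
        · rw [hu0, h11]; omega
        · exact h1pos
      · intro j hj; interval_cases j
        rw [hu0, h11]; omega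
    · -- inductive step
      have htail_mem : ∀ x ∈ (List.ofFn fun j : Fin M => A (j+1)), (2:ℤ) ≤ x := by
        intro x hx
        rw [List.mem_ofFn] at hx
        obtain ⟨j, rfl⟩ := hx
        exact hA (j+1) (by omega)
      have htail_ne : (List.ofFn fun j : Fin M => A (j+1)) ≠ [] := by
        simp [List.ofFn_eq_nil_iff]; omega
      set T := ncf (List.ofFn fun j : Fin M => A (j+1)) with hT
      have hT1 : (1:ℚ) < T := ncf_gt_one _ htail_mem htail_ne
      have hTpos : (0:ℚ) < T := by linarith
      have hv' : (u 0 : ℚ) / (u 1 : ℚ) = (A 0 : ℚ) - T⁻¹ := by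
        rw [hv, hofn]; rfl
      have hu2q : (u 2 : ℚ) = (A 0 : ℚ) * (u 1 : ℚ) - (u 0 : ℚ) := by exact_mod_cast hu2
      have hdiv : (u 2 : ℚ) / (u 1 : ℚ) = T⁻¹ := by
        rw [hu2q, sub_div, mul_div_assoc, div_self h1ne, mul_one, hv']
        ring
      have hinvpos : (0:ℚ) < T⁻¹ := inv_pos.2 hTpos
      have hinvlt : T⁻¹ < 1 := by rw [inv_eq_one_div]; exact (div_lt_one hTpos).mpr hT1
      have hu2pos : 0 < u 2 := by
        have hval : (u 2 : ℚ) = T⁻¹ * (u 1 : ℚ) := by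
          rw [← hdiv, div_mul_cancel₀ _ h1ne]
        have h2 : (0:ℚ) < (u 2 : ℚ) := by
          rw [hval]
          exact mul_pos hinvpos (by exact_mod_cast h1pos)
        exact_mod_cast h2
      have hu21 : u 2 < u 1 := by
        have : (u 2 : ℚ) / (u 1 : ℚ) < 1 := by rw [hdiv]; exact hinvlt
        have := (div_lt_one (by exact_mod_cast h1pos)).mp this
        exact_mod_cast this
      have hu2ne : ((u 2 : ℚ)) ≠ 0 := by
        have : (0:ℤ) < u 2 := hu2pos
        exact_mod_cast this.ne'
      have hTval : (u 1 : ℚ) / (u 2 : ℚ) = T := by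
        rw [eq_comm, ← inv_inv T, ← hdiv, inv_div]
      have hcop' : IsCoprime (u 1) (u 2) := by
        have h := (hcop.symm.neg_right).add_mul_left_right (A 0)
        have : -(u 0) + u 1 * A 0 = A 0 * u 1 - u 0 := by ring
        rw [this] at h
        rwa [← hu2] at h
      obtain ⟨p1, p2, p3, p4⟩ := ihM (fun j => u (j+1)) (fun j => A (j+1)) hM1
        (fun j hj => hA (j+1) (by omega)) (fun j hj => hrec (j+1) (by omega))
        hu2pos hcop' hTval
      have hu01 : u 1 < u 0 := by
        have : (1:ℚ) < (u 0 : ℚ) / (u 1 : ℚ) := by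
          rw [hv']
          have : (2:ℚ) ≤ (A 0 : ℚ) := by exact_mod_cast hA0
          linarith
        have := (one_lt_div (by exact_mod_cast h1pos)).mp this
        exact_mod_cast this
      refine ⟨?_, ?_, p3, p4⟩
      · intro j hj
        match j with
        | 0 => linarith
        | (j+1) => exact p1 j (by omega)
      · intro j hj
        match j with
        | 0 => exact hu01
        | (j+1) => exact p2 j (by omega)

theorem stmt11 (n q : ℤ) (hq : 1 < q) (hn : q < n) (hcop : IsCoprime n q)
    (N : ℕ) (hN : 1 ≤ N) (α : ℕ → ℤ) (hαb : ∀ t, 1 ≤ t → t ≤ N → 2 ≤ α t)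
    (hncf : ncf (List.ofFn (fun j : Fin N => α (j + 1))) = (n : ℚ) / (q : ℚ))
    (e : ℕ) (he : 3 ≤ e) (a : ℕ → ℤ) (hab : ∀ j, 2 ≤ j → j ≤ e - 1 → 2 ≤ a j)
    (hancf : ncf (List.ofFn (fun j : Fin (e - 2) => a (j + 2))) =
      (n : ℚ) / ((n : ℚ) - (q : ℚ)))
    (i : ℕ → ℤ) (hi0 : i 0 = n) (hi1 : i 1 = q)
    (hirec : ∀ t, 1 ≤ t → t ≤ N → i (t + 1) = α t * i t - i (t - 1))
    (r : ℕ → ℤ) (hr2 : r 2 = a 2 * (n - q) - q) (hr3 : r 3 = r 2 - (n - q))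
    (hr4 : r 4 = (a 3 + 1) * r 3 - r 2)
    (hrrec : ∀ j, 5 ≤ j → j ≤ e → r j = a (j - 1) * r (j - 1) - r (j - 2))
    (l : ℕ → ℕ) (hl : ∀ j, (l j : ℤ) = 2 + ∑ p ∈ Finset.Icc 1 j, (α p - 2))
    (b : ℕ → ℕ) (hb0 : b 0 = 1) (hblN : b (l N - 1) = N)
    (hb : ∀ t, 1 ≤ t → t ≤ l N - 2 →
      1 ≤ b t ∧ b t ≤ N ∧ (t : ℤ) ≤ ∑ p ∈ Finset.Icc 1 (b t), (α p - 2) ∧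
        ∀ m, 1 ≤ m → m ≤ N → (t : ℤ) ≤ ∑ p ∈ Finset.Icc 1 m, (α p - 2) → b t ≤ m) :
    ∀ t, 2 ≤ t → t ≤ e - 2 →
      r (t + 1) = r (t + 2) + i (b t) ∧ r (t + 2) < r (t + 1) := by
  -- i-series facts
  have hirec' : ∀ j, j < N → i (j+2) = α (j+1) * i (j+1) - i j := by
    intro j hj
    have h := hirec (j+1) (by omega) (by omega)
    simpa using h
  obtain ⟨ipos, idec, iN, iN1⟩ := seq_of_ncf N i (fun j => α (j+1)) hN
    (fun j hj => hαb (j+1) (by omega) (by omega)) hirec' (by rw [hi1]; omega)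
    (by rw [hi0, hi1]; exact hcop) (by rw [hncf, hi0, hi1])
  have istrict : ∀ j, j ≤ N → i (j+1) < i j := by
    intro j hj
    rcases eq_or_lt_of_le hj with h | h
    · subst h; rw [iN1, iN]; omega
    · exact idec j h
  have inn : ∀ j, j ≤ N + 1 → 0 ≤ i j := by
    intro j hj
    rcases eq_or_lt_of_le hj with h | h
    · subst h; rw [iN1]
    · exact le_of_lt (ipos j (by omega))
  -- S facts
  set S : ℕ → ℤ := fun m => ∑ p ∈ Finset.Icc 1 m, (α p - 2) with hSdef
  have hSS : ∀ m, S m = ∑ p ∈ Finset.Icc 1 m, (α p - 2) := fun m => rfl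
  have S0 : S 0 = 0 := by simp [hSdef]
  have Snn : ∀ m, m ≤ N → 0 ≤ S m := by
    intro m hm
    rw [hSS]
    apply Finset.sum_nonneg
    intro p hp
    rw [Finset.mem_Icc] at hp
    have := hαb p hp.1 (le_trans hp.2 hm)
    omega
  have Sstep : ∀ m, 1 ≤ m → S m = S (m-1) + (α m - 2) := by
    intro m hm
    obtain ⟨m', rfl⟩ : ∃ m', m = m' + 1 := ⟨m - 1, by omega⟩
    rw [hSS, hSS, Nat.add_sub_cancel]
    rw [Finset.sum_Icc_succ_top (by omega : 1 ≤ m' + 1)]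
  have Smono : ∀ m m', m ≤ m' → m' ≤ N → S m ≤ S m' := by
    intro m m' h1 h2
    rw [hSS, hSS]
    apply Finset.sum_le_sum_of_subset_of_nonneg
    · exact Finset.Icc_subset_Icc_right h1
    · intro p hp _
      rw [Finset.mem_Icc] at hp
      have := hαb p hp.1 (le_trans hp.2 h2)
      omega
  have hlN : (l N : ℤ) = 2 + S N := by rw [hSS]; exact hl N
  have hlN2 : 2 ≤ l N := by have := Snn N le_rfl; omega
  set M : ℕ := l N - 1 with hMdef
  have hM1 : 1 ≤ M := by omega
  have hSN : S N = (M : ℤ) - 1 := by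
    have : (M : ℤ) = (l N : ℤ) - 1 := by omega
    omega
  -- b facts
  have hbM : b M = N := hblN
  have bIn : ∀ t, t ≤ M → 1 ≤ b t ∧ b t ≤ N := by
    intro t ht
    rcases Nat.eq_zero_or_pos t with rfl | ht1
    · rw [hb0]; exact ⟨le_rfl, hN⟩
    · rcases eq_or_lt_of_le ht with rfl | htlt
      · rw [hbM]; exact ⟨hN, le_rfl⟩
      · have h := hb t ht1 (by omega)
        exact ⟨h.1, h.2.1⟩
  have hbS : ∀ t, 1 ≤ t → t ≤ l N - 2 → (t : ℤ) ≤ S (b t) := by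
    intro t h1 h2
    rw [hSS]
    exact (hb t h1 h2).2.2.1
  have hbmin : ∀ t, 1 ≤ t → t ≤ l N - 2 → ∀ m, 1 ≤ m → m ≤ N → (t:ℤ) ≤ S m → b t ≤ m := by
    intro t h1 h2 m hm1 hm2 hm3
    exact (hb t h1 h2).2.2.2 m hm1 hm2 (by rw [← hSS]; exact hm3)
  have bmono1 : ∀ t, t < M → b t ≤ b (t+1) := by
    intro t ht
    rcases Nat.eq_zero_or_pos t with rfl | ht1
    · rw [hb0]; exact (bIn 1 (by omega)).1
    · rcases eq_or_lt_of_le (show t + 1 ≤ M by omega) with he1 | he1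
      · rw [he1, hbM]; exact (bIn t (by omega)).2
      · have h2 := hbS (t+1) (by omega) (by omega)
        have h3 := bIn (t+1) (by omega)
        exact hbmin t ht1 (by omega) (b (t+1)) h3.1 h3.2 (by push_cast at h2 ⊢; omega)
  have bmono : ∀ t t', t ≤ t' → t' ≤ M → b t ≤ b t' := by
    intro t t' h1 h2
    obtain ⟨d, rfl⟩ : ∃ d, t' = t + d := ⟨t' - t, by omega⟩
    clear h1
    induction d with
    | zero => exact le_rfl
    | succ d ih =>
      have h3 := bmono1 (t+d) (by omega)
      have h4 := ih (by omega)
      show b t ≤ b ((t+d)+1)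
      omega
  have B1 : ∀ t, 1 ≤ t → t ≤ l N - 2 → S (b t - 1) ≤ (t:ℤ) - 1 := by
    intro t h1 h2
    have hin := bIn t (by omega)
    rcases eq_or_lt_of_le hin.1 with heq | hgt
    · rw [show b t - 1 = 0 by omega, S0]; omega
    · by_contra hcon
      push_neg at hcon
      have := hbmin t h1 h2 (b t - 1) (by omega) (by omega) (by omega)
      omega
  have jfact : ∀ t, 1 ≤ t → t ≤ M → b (t-1) < b t →
      S (b (t-1)) = (t:ℤ) - 1 ∧ S (b t - 1) = (t:ℤ) - 1 := by
    intro t h1 h2 hj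
    have hbt := bIn t h2
    have hbt1 := bIn (t-1) (by omega)
    have hmid : S (b (t-1)) ≤ S (b t - 1) := Smono _ _ (by omega) (by omega)
    have hlow : (t:ℤ) - 1 ≤ S (b (t-1)) := by
      rcases Nat.eq_zero_or_pos (t-1) with h0 | hpos
      · have := Snn (b (t-1)) (by omega)
        omega
      · have := hbS (t-1) hpos (by omega)
        omega
    have hup : S (b t - 1) ≤ (t:ℤ) - 1 := by
      rcases eq_or_lt_of_le h2 with heq | hlt
      · subst heq
        rw [hbM]
        have := Smono (N-1) N (by omega) le_rfl
        omega
      · exact B1 t h1 (by omega)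
    omega
  -- mm and s'
  set mm : ℕ → ℤ := fun k => (k:ℤ) - 1 - S (b (k-1) - 1) with hmmdef
  have hmm : ∀ k, mm k = (k:ℤ) - 1 - S (b (k-1) - 1) := fun k => rfl
  set s' : ℕ → ℤ := fun k => if k ≤ M + 1 then i (b (k-1) - 1) - mm k * i (b (k-1)) else 0
    with hs'def
  have s'eq : ∀ k, k ≤ M + 1 → s' k = i (b (k-1) - 1) - mm k * i (b (k-1)) := by
    intro k hk; rw [hs'def]; simp only; rw [if_pos hk]
  have s'eq' : ∀ k, M + 1 < k → s' k = 0 := by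
    intro k hk; rw [hs'def]; simp only; rw [if_neg (by omega)]
  have mmub : ∀ k, 2 ≤ k → k ≤ M → mm k ≤ α (b (k-1)) - 2 := by
    intro k h2 hM'
    have h := hbS (k-1) (by omega) (by omega)
    have hin := bIn (k-1) (by omega)
    have hst := Sstep (b (k-1)) (by omega)
    rw [hmm]
    omega
  have mmlb : ∀ k, 2 ≤ k → k ≤ M + 1 → 1 ≤ mm k := by
    intro k h2 hk
    rw [hmm]
    rcases eq_or_lt_of_le hk with heq | hlt
    · subst heq
      have h1 : S (N-1) ≤ S N := Smono _ _ (by omega) le_rfl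
      have hbMM : b (M + 1 - 1) = N := by simpa using hbM
      rw [hbMM]
      omega
    · have := B1 (k-1) (by omega) (by omega)
      omega
  have mmtop : mm (M+1) = α N - 1 := by
    have hst := Sstep N hN
    have hbMM : b (M + 1 - 1) = N := by simpa using hbM
    rw [hmm, hbMM]
    omega
  -- flat region lemmas
  have flatdiff : ∀ c p, 1 ≤ c → c ≤ p → p ≤ N → (∀ j, c < j → j ≤ p → α j = 2) →
      i p - i (p+1) = i c - i (c+1) := by
    intro c p hc hcp
    induction p, hcp using Nat.le_induction with
    | base => intro _ _; rfl
    | succ p hp ih =>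
      intro hpN hflat
      have hα : α (p+1) = 2 := hflat (p+1) (by omega) le_rfl
      have hr := hirec (p+1) (by omega) (by omega)
      rw [hα] at hr
      simp only [Nat.add_sub_cancel] at hr
      have hprev := ih (by omega) (fun j hj1 hj2 => hflat j hj1 (by omega))
      omega
  have flatval : ∀ c p, 1 ≤ c → c ≤ p → p ≤ N + 1 → (∀ j, c < j → j < p → α j = 2) →
      i p = i c - ((p:ℤ) - (c:ℤ)) * (i c - i (c+1)) := by
    intro c p hc hcp
    induction p, hcp using Nat.le_induction with
    | base => intro _ _; push_cast; ring
    | succ p hp ih =>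
      intro hpN hflat
      have h1 : i p - i (p+1) = i c - i (c+1) :=
        flatdiff c p hc hp (by omega) (fun j hj1 hj2 => hflat j hj1 (by omega))
      have h2 := ih (by omega) (fun j hj1 hj2 => hflat j hj1 (by omega))
      push_cast
      push_cast at h2
      linear_combination h2 - h1
  -- Step 1
  have step1 : ∀ k, 1 ≤ k → k ≤ M + 1 →
      s' (k+1) = i (b (k-1) - 1) - (mm k + 1) * i (b (k-1)) := by
    intro k h1 hk
    rcases eq_or_lt_of_le hk with heq | hlt
    · subst heq
      have h0 : s' (M+1+1) = 0 := s'eq' (M+2) (by omega)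
      have hbMM : b (M + 1 - 1) = N := by simpa using hbM
      rw [h0, hbMM, mmtop]
      have hrecN := hirec N hN le_rfl
      rw [iN1] at hrecN
      linear_combination -hrecN
    · have hkM : k ≤ M := by omega
      have hs3 := s'eq (k+1) (by omega)
      simp only [Nat.add_sub_cancel] at hs3
      rw [hs3]
      have hmono := bmono (k-1) k (by omega) hkM
      rcases eq_or_lt_of_le hmono with heq | hjump
      · rw [← heq]
        have hme : mm (k+1) = mm k + 1 := by
          rw [hmm, hmm]
          simp only [Nat.add_sub_cancel]
          rw [← heq]
          push_cast
          omega
        rw [hme]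
      · obtain ⟨hS1, hS2⟩ := jfact k h1 hkM hjump
        have hbk := bIn k hkM
        have hbk1 := bIn (k-1) (by omega)
        have hflat : ∀ j, b (k-1) < j → j ≤ b k - 1 → α j = 2 := by
          intro j hj1 hj2
          have e1 : S (b (k-1)) ≤ S (j-1) := Smono _ _ (by omega) (by omega)
          have e2 : S (j-1) ≤ S j := Smono _ _ (by omega) (by omega)
          have e3 : S j ≤ S (b k - 1) := Smono _ _ (by omega) (by omega)
          have e4 := Sstep j (by omega)
          omega
        have hfd := flatdiff (b (k-1)) (b k - 1) (by omega) (by omega) (by omega) hflat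
        have hbk' : b k - 1 + 1 = b k := by omega
        rw [hbk'] at hfd
        have hmm1 : mm (k+1) = 1 := by
          rw [hmm]
          simp only [Nat.add_sub_cancel]
          push_cast
          omega
        have hmmk : mm k = α (b (k-1)) - 2 := by
          have := Sstep (b (k-1)) (by omega)
          rw [hmm]
          omega
        have hreck := hirec (b (k-1)) (by omega) (by omega)
        rw [hmm1, hmmk]
        linear_combination hfd - hreck
  -- Step 2
  have step2 : ∀ k, 2 ≤ k → k ≤ M + 1 →
      s' (k+1) = (2 + (b (k-1) : ℤ) - (b (k-2) : ℤ)) * s' k - s' (k-1) := by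
    intro k h2 hk
    rw [step1 k (by omega) hk, s'eq k hk, s'eq (k-1) (by omega)]
    have hk12 : (k-1) - 1 = k - 2 := by omega
    rw [hk12]
    have hmono := bmono (k-2) (k-1) (by omega) (by omega)
    rcases eq_or_lt_of_le hmono with heq | hjump
    · have hme : mm (k-1) = mm k - 1 := by
        rw [hmm, hmm, hk12, ← heq]
        push_cast [Nat.cast_sub (show 1 ≤ k by omega)]
        ring
      rw [← heq, hme]
      ring
    · have hjump' : b ((k-1)-1) < b (k-1) := by rw [hk12]; exact hjump
      obtain ⟨hS1, hS2⟩ := jfact (k-1) (by omega) (by omega) hjump'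
      rw [hk12] at hS1
      have hcast : ((k-1:ℕ):ℤ) = (k:ℤ) - 1 := by omega
      rw [hcast] at hS1 hS2
      have hbk1 := bIn (k-1) (by omega)
      have hbk2 := bIn (k-2) (by omega)
      have hmmk : mm k = 1 := by rw [hmm]; omega
      have hmmk1 : mm (k-1) = α (b (k-2)) - 2 := by
        have := Sstep (b (k-2)) (by omega)
        rw [hmm, hk12, hcast]
        omega
      have hflat : ∀ j, b (k-2) < j → j < b (k-1) → α j = 2 := by
        intro j hj1 hj2
        have e1 : S (b (k-2)) ≤ S (j-1) := Smono _ _ (by omega) (by omega)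
        have e2 : S (j-1) ≤ S j := Smono _ _ (by omega) (by omega)
        have e3 : S j ≤ S (b (k-1) - 1) := Smono _ _ (by omega) (by omega)
        have e4 := Sstep j (by omega)
        omega
      have hfv1 := flatval (b (k-2)) (b (k-1)) (by omega) (by omega) (by omega) hflat
      have hfv2 := flatval (b (k-2)) (b (k-1) - 1) (by omega) (by omega) (by omega)
        (fun j hj1 hj2 => hflat j hj1 (by omega))
      have hrecB := hirec (b (k-2)) (by omega) (by omega)
      have hcast2 : ((b (k-1) - 1 : ℕ) : ℤ) = (b (k-1) : ℤ) - 1 := by omega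
      rw [hcast2] at hfv2
      rw [hmmk, hmmk1]
      linear_combination ((b (k-1):ℤ) - (b (k-2):ℤ)) * hfv1
        - (1 + (b (k-1):ℤ) - (b (k-2):ℤ)) * hfv2 + hrecB
  -- special values of s'
  have s1 : s' 1 = n := by
    rw [s'eq 1 (by omega)]
    have hmm1 : mm 1 = 0 := by
      rw [hmm, hb0]
      simp [S0]
    rw [hmm1]
    simp only [Nat.sub_self, hb0, Nat.sub_self]
    rw [hi0]
    ring
  have s2 : s' 2 = n - q := by
    have h := step1 1 le_rfl (by omega)
    have hmm1 : mm 1 = 0 := by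
      rw [hmm, hb0]
      simp [S0]
    rw [hmm1] at h
    simp only [Nat.sub_self, hb0] at h
    rw [h, hi0, hi1]
    ring
  have sM1 : s' (M+1) = 1 := by
    rw [s'eq (M+1) le_rfl]
    have hbMM : b (M+1-1) = N := by simpa using hbM
    rw [hbMM, mmtop]
    have hrecN := hirec N hN le_rfl
    linear_combination hrecN - iN1 + iN
  have sM2 : s' (M+2) = 0 := s'eq' (M+2) (by omega)
  -- positivity of s'
  have spos : ∀ k, 1 ≤ k → k ≤ M + 1 → 0 < s' k := by
    intro k hk1 hk2
    rcases eq_or_lt_of_le hk1 with heq | hk1'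
    · rw [← heq, s1]; omega
    rcases eq_or_lt_of_le hk2 with heq | hk2'
    · rw [heq, sM1]; omega
    · rw [s'eq k (by omega)]
      have hbk1 := bIn (k-1) (by omega)
      have h1m := mmlb k (by omega) (by omega)
      have h2m := mmub k (by omega) (by omega)
      have hrecB := hirec (b (k-1)) (by omega) (by omega)
      have hip : 0 < i (b (k-1)) := ipos _ (by omega)
      have hsd : i (b (k-1) + 1) < i (b (k-1)) := istrict _ (by omega)
      have h3 : mm k * i (b (k-1)) ≤ (α (b (k-1)) - 2) * i (b (k-1)) :=
        mul_le_mul_of_nonneg_right h2m hip.le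
      have h4 : (α (b (k-1)) - 2) * i (b (k-1))
          = α (b (k-1)) * i (b (k-1)) - 2 * i (b (k-1)) := by ring
      linarith [hrecB, h3, h4, hsd, hip]
  -- the dual continued fraction
  have hdualncf : ncf (List.ofFn fun j : Fin M => (2 + (b (j+1) : ℤ) - (b j : ℤ))) =
      (n : ℚ) / ((n:ℚ) - (q:ℚ)) := by
    have h := ncf_of_seq M (fun j => s' (j+1)) (fun j => 2 + (b (j+1) : ℤ) - (b j : ℤ))
      (by
        intro j hj
        have h := step2 (j+2) (by omega) (by omega)
        simpa using h)
      (fun j h1 h2 => spos (j+1) (by omega) (by omega))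
      sM1 sM2
    rw [h]
    show (s' (0+1) : ℚ) / (s' (1+1) : ℚ) = _
    norm_num
    rw [s1, s2]
    push_cast
    ring
  -- identify the dual expansion
  have hLeq : (List.ofFn fun j : Fin (e-2) => a (j+2))
      = List.ofFn fun j : Fin M => (2 + (b (j+1):ℤ) - (b j:ℤ)) := by
    apply ncf_inj
    · intro x hx
      rw [List.mem_ofFn] at hx
      obtain ⟨j, rfl⟩ := hx
      have hj2 : (j:ℕ) < e - 2 := j.isLt
      exact hab ((j:ℕ)+2) (by omega) (by omega)
    · intro x hx
      rw [List.mem_ofFn] at hx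
      obtain ⟨j, rfl⟩ := hx
      have hj2 : (j:ℕ) < M := j.isLt
      have := bmono (j:ℕ) ((j:ℕ)+1) (by omega) (by omega)
      show (2:ℤ) ≤ 2 + ((b ((j:ℕ)+1)):ℤ) - ((b (j:ℕ)):ℤ)
      omega
    · rw [hancf, hdualncf]
  have hlen : e - 2 = M := by
    have h := congrArg List.length hLeq
    simpa using h
  have hE : e = M + 2 := by omega
  have hentry : ∀ j, j < M → a (j+2) = 2 + (b (j+1) : ℤ) - (b j : ℤ) := by
    intro j hj
    have h := congrArg (fun L => L[j]?) hLeq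
    simp only [List.getElem?_ofFn] at h
    rw [dif_pos (show j < e-2 by omega), dif_pos hj] at h
    simpa using h
  -- r agrees with s'
  have hrs : ∀ k, 3 ≤ k → k ≤ M + 2 → r k = s' k := by
    intro k
    induction k using Nat.strong_induction_on with
    | _ k ih =>
      intro h3 hk
      have ha2 : a 2 = 2 + (b 1 : ℤ) - (b 0 : ℤ) := by simpa using hentry 0 (by omega)
      have hs3 : s' 3 = a 2 * (n - q) - n := by
        have h := step2 2 le_rfl (by omega)
        norm_num at h
        rw [s1, s2] at h
        rw [h, ha2]
      rcases (show k = 3 ∨ k = 4 ∨ 5 ≤ k by omega) with rfl | hk45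
      · rw [hr3, hr2, hs3]
        ring
      rcases hk45 with rfl | hk5
      · have ha3 : a 3 = 2 + (b 2 : ℤ) - (b 1 : ℤ) := by simpa using hentry 1 (by omega)
        have hs4 : s' 4 = a 3 * s' 3 - (n - q) := by
          have h := step2 3 (by omega) (by omega)
          norm_num at h
          rw [s2] at h
          rw [h, ha3]
        rw [hr4, hr3, hr2, hs4, hs3]
        ring
      · have hr := hrrec k (by omega) (by omega)
        have ih1 : r (k-1) = s' (k-1) := ih (k-1) (by omega) (by omega) (by omega)
        have ih2 : r (k-2) = s' (k-2) := ih (k-2) (by omega) (by omega) (by omega)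
        have hak : a (k-1) = 2 + (b (k-2) : ℤ) - (b (k-3) : ℤ) := by
          have h := hentry (k-3) (by omega)
          rw [show k-3+2 = k-1 by omega, show k-3+1 = k-2 by omega] at h
          exact h
        have hstep := step2 (k-1) (by omega) (by omega)
        rw [show k-1+1 = k by omega, show k-1-1 = k-2 by omega,
          show k-1-2 = k-3 by omega] at hstep
        rw [hr, ih1, ih2, hstep, hak]
  -- final assembly
  intro t ht hte
  have htM : t ≤ M := by omega
  have h1 := step1 (t+1) (by omega) (by omega)
  have h2 := s'eq (t+1) (by omega)
  simp only [Nat.add_sub_cancel] at h1 h2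
  have hra : r (t+1) = s' (t+1) := hrs (t+1) (by omega) (by omega)
  have hrb : r (t+2) = s' (t+2) := hrs (t+2) (by omega) (by omega)
  have hipos : 0 < i (b t) := ipos _ (bIn t htM).2
  have heq : r (t + 1) = r (t + 2) + i (b t) := by
    rw [hra, hrb, show t+2 = (t+1)+1 from rfl, h1, h2]
    ring
  exact ⟨heq, by omega⟩
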